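/- arXiv:math/0610053 — 4 statements merged into one kernel-verified Lean document; each statement's English description precedes it below -/
import Mathlib

section
/- Let F be a family of subsets of a set X with |F| ≥ 2, and for each x ∈ ∪F \ ∩F define transformations γ_x and γ̃_x of F by: Sγ_x = S ∪ {x} if S ∪ {x} ∈ F and Sγ_x = S otherwise; Sγ̃_x = S \ {x} if S \ {x} ∈ F and Sγ̃_x = S otherwise. Let G_F be the family of all these transformations. Then (F, G_F) is a medium (in particular, every γ_x and γ̃_x differs from the identity transformation of F) if and only if F is well-graded. -/
open scoped Classical symmDiff

universe u

namespace Media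

variable {S : Type u}

/-- The state obtained by applying the message (string of tokens) `m` to the state `s`. -/
def apply (s : S) (m : List (S → S)) : S :=
  m.foldl (fun x τ => τ x) s

/-- The sequence of states `S₀ = s, S₁, …, Sₙ` produced by the message `m` from the state `s`. -/
def produced (s : S) (m : List (S → S)) : List S :=
  m.scanl (fun x τ => τ x) s

/-- `τ'` is a reverse of the token `τ`. -/
def IsReverse (τ τ' : S → S) : Prop :=
  ∀ P Q : S, P ≠ Q → (τ P = Q ↔ τ' Q = P)

/-- The message `m` is stepwise effective for the state `s`. -/
def StepwiseEffective (s : S) (m : List (S → S)) : Prop :=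
  List.Chain' (· ≠ ·) (produced s m)

/-- The message `m` is consistent: it does not contain both a token and its reverse. -/
def Consistent (m : List (S → S)) : Prop :=
  ∀ τ ∈ m, ∀ τ' ∈ m, ¬ IsReverse τ τ'

/-- The message `m` is concise for the state `s`. -/
def Concise (s : S) (m : List (S → S)) : Prop :=
  StepwiseEffective s m ∧ Consistent m ∧ m.Nodup

/-- The message `m` is vacuous: its indices can be partitioned into pairs of
mutually reverse tokens. -/
def Vacuous (m : List (S → S)) : Prop :=
  ∃ f : Fin m.length → Fin m.length, Function.Involutive f ∧
    (∀ i, f i ≠ i) ∧ ∀ i, IsReverse (m.get i) (m.get (f i))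

/-- The message `m` is closed for the state `s`. -/
def Closed (s : S) (m : List (S → S)) : Prop :=
  StepwiseEffective s m ∧ apply s m = s

/-- `(S, T)` is a medium: a token system satisfying axioms [M1] and [M2]. -/
def IsMedium (T : Set (S → S)) : Prop :=
  (∃ a b : S, a ≠ b) ∧ T.Nonempty ∧ (∀ τ ∈ T, τ ≠ id) ∧
  (∀ P Q : S, P ≠ Q →
    ∃ m : List (S → S), (∀ τ ∈ m, τ ∈ T) ∧ Concise P m ∧ apply P m = Q) ∧
  (∀ (P : S) (m : List (S → S)), (∀ τ ∈ m, τ ∈ T) → Closed P m → Vacuous m)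

end Media

namespace Media

variable {X : Type u}

/-- The token `γ_x` adding `x` to a member of the family `F` (when possible). -/
noncomputable def gammaAdd (F : Set (Finset X)) (x : X) : ↥F → ↥F :=
  fun A => if h : insert x (A : Finset X) ∈ F then ⟨insert x (A : Finset X), h⟩ else A

/-- The token `γ̃_x` removing `x` from a member of the family `F` (when possible). -/
noncomputable def gammaRemove (F : Set (Finset X)) (x : X) : ↥F → ↥F :=
  fun A => if h : (A : Finset X).erase x ∈ F then ⟨(A : Finset X).erase x, h⟩ else A

/-- The family `G_F` of all transformations `γ_x`, `γ̃_x` for `x ∈ ∪F \ ∩F`. -/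
def mediumTokens (F : Set (Finset X)) : Set (↥F → ↥F) :=
  {g | ∃ x : X, (∃ A ∈ F, x ∈ A) ∧ (∃ B ∈ F, x ∉ B) ∧
    (g = gammaAdd F x ∨ g = gammaRemove F x)}

/-- A family of finite subsets of `X` is well-graded. -/
def WellGraded (F : Set (Finset X)) : Prop :=
  ∀ A ∈ F, ∀ B ∈ F, A ≠ B →
    ∃ c : ℕ → Finset X,
      c 0 = A ∧ c ((A ∆ B).card) = B ∧
      (∀ i ≤ (A ∆ B).card, c i ∈ F) ∧
      (∀ i, 1 ≤ i → i ≤ (A ∆ B).card → (c (i - 1) ∆ c i).card = 1)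

end Media

open Media

section SD
variable {X : Type u}

lemma sd_insert {s : Finset X} {x : X} (h : x ∉ s) : s ∆ insert x s = {x} := by
  ext y; simp only [Finset.mem_symmDiff, Finset.mem_insert, Finset.mem_singleton]; aesop

lemma sd_erase {s : Finset X} {x : X} (h : x ∈ s) : s ∆ s.erase x = {x} := by
  ext y; simp only [Finset.mem_symmDiff, Finset.mem_erase, Finset.mem_singleton]; aesop

lemma sd_singleton_eq_insert {s t : Finset X} {x : X} (h : s ∆ t = {x}) (hx : x ∉ s) :
    x ∈ t ∧ t = insert x s := by
  have h' := Finset.ext_iff.mp h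
  simp only [Finset.mem_symmDiff, Finset.mem_singleton] at h'
  constructor
  · have := (h' x).mpr rfl; tauto
  · ext y
    by_cases hy : y = x
    · subst hy; have := (h' y).mpr rfl; simp; tauto
    · have := h' y; simp [hy]; tauto

lemma sd_singleton_eq_erase {s t : Finset X} {x : X} (h : s ∆ t = {x}) (hx : x ∈ s) :
    x ∉ t ∧ t = s.erase x := by
  have h' := Finset.ext_iff.mp h
  simp only [Finset.mem_symmDiff, Finset.mem_singleton] at h'
  constructor
  · have := (h' x).mpr rfl; tauto
  · ext y
    by_cases hy : y = x
    · subst hy; have := (h' y).mpr rfl; simp [Finset.mem_erase]; tauto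
    · have := h' y; simp [Finset.mem_erase, hy]; tauto

lemma sd_shift {s t u : Finset X} {x : X} (h : s ∆ t = {x}) (hx : x ∉ t ∆ u) :
    s ∆ u = insert x (t ∆ u) := by
  have h' := Finset.ext_iff.mp h
  simp only [Finset.mem_symmDiff, Finset.mem_singleton] at h' hx ⊢
  ext y
  by_cases hy : y = x
  · subst hy; have := (h' y).mpr rfl; simp [Finset.mem_symmDiff]; tauto
  · have := h' y; simp [Finset.mem_symmDiff, hy]; tauto

lemma card_sd_triangle (s t u : Finset X) : (s ∆ u).card ≤ (s ∆ t).card + (t ∆ u).card :=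
  le_trans (Finset.card_le_card (symmDiff_triangle s t u)) (Finset.card_union_le _ _)

end SD
namespace Media
variable {X : Type u} {F : Set (Finset X)}

lemma gammaAdd_subset (x : X) (A : ↥F) : (A : Finset X) ⊆ (gammaAdd F x A : Finset X) := by
  unfold gammaAdd; split <;> simp [Finset.subset_insert]

lemma gammaRemove_subset (x : X) (A : ↥F) : (gammaRemove F x A : Finset X) ⊆ (A : Finset X) := by
  unfold gammaRemove; split <;> simp [Finset.erase_subset]

lemma mem_gammaAdd_iff {x y : X} (h : x ≠ y) (A : ↥F) :
    x ∈ (gammaAdd F y A : Finset X) ↔ x ∈ (A : Finset X) := by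
  unfold gammaAdd; split <;> simp [h]

lemma mem_gammaRemove_iff {x y : X} (h : x ≠ y) (A : ↥F) :
    x ∈ (gammaRemove F y A : Finset X) ↔ x ∈ (A : Finset X) := by
  unfold gammaRemove; split <;> simp [Finset.mem_erase, h]

lemma gammaAdd_apply {x : X} {C : Finset X} (hC : C ∈ F) (h2 : insert x C ∈ F) :
    gammaAdd F x ⟨C, hC⟩ = ⟨insert x C, h2⟩ := by
  unfold gammaAdd; simp [h2]

lemma gammaRemove_apply {x : X} {C : Finset X} (hC : C ∈ F) (h2 : C.erase x ∈ F) :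
    gammaRemove F x ⟨C, hC⟩ = ⟨C.erase x, h2⟩ := by
  unfold gammaRemove; simp [h2]

lemma isReverse_gamma (x : X) : IsReverse (gammaAdd F x) (gammaRemove F x) := by
  intro P Q hPQ
  have hPQ' : (P : Finset X) ≠ (Q : Finset X) := fun h => hPQ (Subtype.ext h)
  constructor
  · intro h
    unfold gammaAdd at h
    split at h
    · rename_i hins
      have hQ : (Q : Finset X) = insert x (P : Finset X) := by rw [← h]
      have hx : x ∉ (P : Finset X) := by
        intro hx; exact hPQ' (by rw [hQ, Finset.insert_eq_self.mpr hx])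
      have hE : (Q : Finset X).erase x = (P : Finset X) := by
        rw [hQ, Finset.erase_insert hx]
      have : (Q : Finset X).erase x ∈ F := hE ▸ P.2
      unfold gammaRemove; rw [dif_pos this]; exact Subtype.ext hE
    · exact absurd h hPQ
  · intro h
    unfold gammaRemove at h
    split at h
    · rename_i hers
      have hP : (P : Finset X) = (Q : Finset X).erase x := by rw [← h]
      have hx : x ∈ (Q : Finset X) := by
        by_contra hx; exact hPQ' (by rw [hP, Finset.erase_eq_self.mpr hx])
      have hE : insert x (P : Finset X) = (Q : Finset X) := by
        rw [hP, Finset.insert_erase hx]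
      have : insert x (P : Finset X) ∈ F := hE ▸ Q.2
      unfold gammaAdd; rw [dif_pos this]; exact Subtype.ext hE
    · exact absurd h (fun hh => hPQ hh.symm)

lemma isReverse_symm {S : Type u} {τ τ' : S → S} (h : IsReverse τ τ') : IsReverse τ' τ :=
  fun P Q hPQ => (h Q P hPQ.symm).symm

end Media
namespace Media
variable {X : Type u} {F : Set (Finset X)}

/-- `τ` is witnessed as an addition or a removal of `x` somewhere in `F`. -/
def Wit (F : Set (Finset X)) (τ : ↥F → ↥F) (x : X) : Prop :=
  (τ = gammaAdd F x ∧ ∃ C, ∃ _ : C ∈ F, x ∉ C ∧ insert x C ∈ F) ∨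
  (τ = gammaRemove F x ∧ ∃ C, ∃ _ : C ∈ F, x ∈ C ∧ C.erase x ∈ F)

lemma Wit.mem_tokens {τ : ↥F → ↥F} {x : X} (h : Wit F τ x) : τ ∈ mediumTokens F := by
  rcases h with ⟨hτ, C, hC, hx, h2⟩ | ⟨hτ, C, hC, hx, h2⟩
  · exact ⟨x, ⟨insert x C, h2, Finset.mem_insert_self x C⟩, ⟨C, hC, hx⟩, Or.inl hτ⟩
  · exact ⟨x, ⟨C, hC, hx⟩, ⟨C.erase x, h2, Finset.notMem_erase x C⟩, Or.inr hτ⟩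

lemma Wit.ne {τ τ' : ↥F → ↥F} {x y : X} (h : Wit F τ x) (h' : Wit F τ' y) (hxy : x ≠ y) :
    τ ≠ τ' := by
  intro heq
  rcases h with ⟨rfl, C, hC, hx, h2⟩ | ⟨rfl, C, hC, hx, h2⟩
  · have hval : gammaAdd F x ⟨C, hC⟩ = ⟨insert x C, h2⟩ := gammaAdd_apply hC h2
    have hxmem : x ∈ (gammaAdd F x ⟨C, hC⟩ : Finset X) := by
      rw [hval]; exact Finset.mem_insert_self x C
    rcases h' with ⟨rfl, _⟩ | ⟨rfl, _⟩
    · rw [heq, mem_gammaAdd_iff hxy] at hxmem; exact hx hxmem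
    · rw [heq] at hxmem; exact hx (gammaRemove_subset y _ hxmem)
  · have hval : gammaRemove F x ⟨C, hC⟩ = ⟨C.erase x, h2⟩ := gammaRemove_apply hC h2
    have hxmem : x ∉ (gammaRemove F x ⟨C, hC⟩ : Finset X) := by
      rw [hval]; exact Finset.notMem_erase x C
    rcases h' with ⟨rfl, _⟩ | ⟨rfl, _⟩
    · rw [heq, mem_gammaAdd_iff hxy] at hxmem; exact hxmem hx
    · rw [heq, mem_gammaRemove_iff hxy] at hxmem; exact hxmem hx

lemma Wit.not_isReverse {τ τ' : ↥F → ↥F} {x y : X} (h : Wit F τ x) (h' : Wit F τ' y)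
    (hxy : x ≠ y) : ¬ IsReverse τ τ' := by
  intro hrev
  rcases h with ⟨rfl, C, hC, hx, h2⟩ | ⟨rfl, C, hC, hx, h2⟩
  · set P : ↥F := ⟨C, hC⟩
    set Q : ↥F := ⟨insert x C, h2⟩
    have hPQ : P ≠ Q := by
      intro hh
      exact hx (by rw [show C = insert x C from congrArg Subtype.val hh]; exact
        Finset.mem_insert_self x C)
    have hτP : gammaAdd F x P = Q := gammaAdd_apply hC h2
    have hτ'Q : τ' Q = P := (hrev P Q hPQ).mp hτP
    have hxQ : x ∈ (Q : Finset X) := Finset.mem_insert_self x C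
    rcases h' with ⟨rfl, _⟩ | ⟨rfl, _⟩
    · have : x ∈ (gammaAdd F y Q : Finset X) := gammaAdd_subset y Q hxQ
      rw [hτ'Q] at this; exact hx this
    · have : x ∈ (gammaRemove F y Q : Finset X) := (mem_gammaRemove_iff hxy Q).mpr hxQ
      rw [hτ'Q] at this; exact hx this
  · set P : ↥F := ⟨C, hC⟩
    set Q : ↥F := ⟨C.erase x, h2⟩
    have hPQ : P ≠ Q := by
      intro hh
      exact Finset.notMem_erase x C
        (by rw [show C.erase x = C from (congrArg Subtype.val hh).symm] at *; exact hx)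
    have hτP : gammaRemove F x P = Q := gammaRemove_apply hC h2
    have hτ'Q : τ' Q = P := (hrev P Q hPQ).mp hτP
    have hxQ : x ∉ (Q : Finset X) := Finset.notMem_erase x C
    rcases h' with ⟨rfl, _⟩ | ⟨rfl, _⟩
    · have : x ∈ (gammaAdd F y Q : Finset X) ↔ x ∈ (Q : Finset X) := mem_gammaAdd_iff hxy Q
      rw [hτ'Q] at this; exact hxQ (this.mp hx)
    · have : x ∈ (gammaRemove F y Q : Finset X) → x ∈ (Q : Finset X) :=
        fun hh => gammaRemove_subset y Q hh
      rw [hτ'Q] at this; exact hxQ (this hx)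

lemma Wit.not_isReverse_self {τ : ↥F → ↥F} {x : X} (h : Wit F τ x) : ¬ IsReverse τ τ := by
  intro hrev
  rcases h with ⟨rfl, C, hC, hx, h2⟩ | ⟨rfl, C, hC, hx, h2⟩
  · set P : ↥F := ⟨C, hC⟩
    set Q : ↥F := ⟨insert x C, h2⟩
    have hPQ : P ≠ Q := by
      intro hh
      exact hx (by rw [show C = insert x C from congrArg Subtype.val hh]; exact
        Finset.mem_insert_self x C)
    have hτ'Q : gammaAdd F x Q = P := (hrev P Q hPQ).mp (gammaAdd_apply hC h2)
    have : x ∈ (gammaAdd F x Q : Finset X) := gammaAdd_subset x Q (Finset.mem_insert_self x C)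
    rw [hτ'Q] at this; exact hx this
  · set P : ↥F := ⟨C, hC⟩
    set Q : ↥F := ⟨C.erase x, h2⟩
    have hPQ : P ≠ Q := by
      intro hh
      exact Finset.notMem_erase x C
        (by rw [show C.erase x = C from (congrArg Subtype.val hh).symm] at *; exact hx)
    have hτ'Q : gammaRemove F x Q = P := (hrev P Q hPQ).mp (gammaRemove_apply hC h2)
    have : x ∈ (Q : Finset X) := by
      have := gammaRemove_subset x Q
      rw [hτ'Q] at this
      exact this hx
    exact Finset.notMem_erase x C this

/-- Shape of an effective step of a medium token. -/
lemma step_shape {τ : ↥F → ↥F} (hτ : τ ∈ mediumTokens F) (s : ↥F) (hne : τ s ≠ s) :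
    ∃ x : X,
      (τ = gammaAdd F x ∧ x ∉ (s : Finset X) ∧ (τ s : Finset X) = insert x (s : Finset X)) ∨
      (τ = gammaRemove F x ∧ x ∈ (s : Finset X) ∧ (τ s : Finset X) = (s : Finset X).erase x) := by
  obtain ⟨x, -, -, (rfl | rfl)⟩ := hτ
  · refine ⟨x, Or.inl ⟨rfl, ?_⟩⟩
    unfold gammaAdd at hne ⊢
    split at hne
    · rename_i hins
      rw [dif_pos hins]
      have : insert x (s : Finset X) ≠ (s : Finset X) := fun hh => hne (Subtype.ext hh)
      exact ⟨fun hx => this (Finset.insert_eq_self.mpr hx), rfl⟩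
    · exact absurd rfl hne
  · refine ⟨x, Or.inr ⟨rfl, ?_⟩⟩
    unfold gammaRemove at hne ⊢
    split at hne
    · rename_i hers
      rw [dif_pos hers]
      have : (s : Finset X).erase x ≠ (s : Finset X) := fun hh => hne (Subtype.ext hh)
      exact ⟨by by_contra hx; exact this (Finset.erase_eq_self.mpr hx), rfl⟩
    · exact absurd rfl hne

end Media
namespace Media
variable {S : Type u}

@[simp] lemma apply_nil (s : S) : apply s [] = s := rfl

@[simp] lemma apply_cons (s : S) (τ : S → S) (m : List (S → S)) :
    apply s (τ :: m) = apply (τ s) m := rfl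

lemma apply_append (s : S) (l₁ l₂ : List (S → S)) :
    apply s (l₁ ++ l₂) = apply (apply s l₁) l₂ := by
  simp [apply, List.foldl_append]

lemma se_nil (s : S) : StepwiseEffective s ([] : List (S → S)) := by
  simp [StepwiseEffective, produced]
  exact List.isChain_singleton _

lemma se_cons {s : S} {τ : S → S} {m : List (S → S)} :
    StepwiseEffective s (τ :: m) ↔ s ≠ τ s ∧ StepwiseEffective (τ s) m := by
  unfold StepwiseEffective produced
  rw [List.scanl_cons]
  unfold List.Chain'
  rw [List.isChain_cons]
  constructor
  · rintro ⟨h1, h2⟩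
    refine ⟨?_, h2⟩
    apply h1
    cases m <;> simp [List.scanl]
  · rintro ⟨h1, h2⟩
    refine ⟨?_, h2⟩
    intro y hy
    cases m <;> simp [List.scanl] at hy <;> [skip; skip] <;> first | (subst hy; exact h1) | exact hy ▸ h1

lemma stepwise_take {s : S} {m : List (S → S)} (h : StepwiseEffective s m) :
    ∀ k, k < m.length → apply s (m.take k) ≠ apply s (m.take (k + 1)) := by
  induction m generalizing s with
  | nil => intro k hk; simp at hk
  | cons τ m ih =>
    intro k hk
    rcases se_cons.mp h with ⟨h1, h2⟩
    cases k with
    | zero => simpa using h1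
    | succ k =>
      simp only [List.take_succ_cons, apply_cons]
      exact ih h2 k (by simpa using hk)

lemma apply_take_succ (s : S) (m : List (S → S)) (k : ℕ) (hk : k < m.length) :
    apply s (m.take (k + 1)) = (m.get ⟨k, hk⟩) (apply s (m.take k)) := by
  rw [List.take_succ]
  rw [apply_append]
  have : m[k]? = some (m.get ⟨k, hk⟩) := by
    rw [List.getElem?_eq_getElem hk]; rfl
  rw [this]
  rfl

end Media
namespace Media
variable {X : Type u} {F : Set (Finset X)}

lemma preserve {x : X} : ∀ (m : List (↥F → ↥F)) (s : ↥F),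
    (∀ τ ∈ m, τ ∈ mediumTokens F) → StepwiseEffective s m →
    gammaAdd F x ∉ m → gammaRemove F x ∉ m →
    (x ∈ (↑(apply s m) : Finset X) ↔ x ∈ (s : Finset X)) := by
  intro m
  induction m with
  | nil => intro s _ _ _ _; simp
  | cons τ m ih =>
    intro s htok hse hA hR
    obtain ⟨h1, h2⟩ := se_cons.mp hse
    obtain ⟨y, hy⟩ := step_shape (htok τ (List.mem_cons_self)) s (Ne.symm h1)
    have hxy : x ≠ y := by
      rintro rfl
      rcases hy with ⟨rfl, -⟩ | ⟨rfl, -⟩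
      · exact hA (List.mem_cons_self)
      · exact hR (List.mem_cons_self)
    have hstep : x ∈ (τ s : Finset X) ↔ x ∈ (s : Finset X) := by
      rcases hy with ⟨rfl, -⟩ | ⟨rfl, -⟩
      · exact mem_gammaAdd_iff hxy s
      · exact mem_gammaRemove_iff hxy s
    rw [apply_cons,
      ih (τ s) (fun τ' hτ' => htok τ' (List.mem_cons_of_mem _ hτ')) h2
        (fun hh => hA (List.mem_cons_of_mem _ hh)) (fun hh => hR (List.mem_cons_of_mem _ hh))]
    exact hstep

lemma descend : ∀ (m : List (↥F → ↥F)) (s : ↥F),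
    (∀ τ ∈ m, τ ∈ mediumTokens F) → StepwiseEffective s m → Consistent m → m.Nodup →
    (((s : Finset X) ∆ (↑(apply s m) : Finset X)).card = m.length ∧
     ∃ c : ℕ → Finset X, c 0 = (s : Finset X) ∧ c m.length = (↑(apply s m) : Finset X) ∧
       (∀ i ≤ m.length, c i ∈ F) ∧
       (∀ i, 1 ≤ i → i ≤ m.length → (c (i - 1) ∆ c i).card = 1)) := by
  intro m
  induction m with
  | nil =>
    intro s _ _ _ _
    exact ⟨by simp, fun _ => (s : Finset X), rfl, rfl, fun i _ => s.2, fun i h1 h2 => by simp at h2; omega⟩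
  | cons τ m ih =>
    intro s htok hse hcons hnd
    obtain ⟨h1, h2⟩ := se_cons.mp hse
    obtain ⟨x, hx⟩ := step_shape (htok τ (List.mem_cons_self)) s (Ne.symm h1)
    have hsd : (s : Finset X) ∆ (τ s : Finset X) = {x} := by
      rcases hx with ⟨-, hx1, hx2⟩ | ⟨-, hx1, hx2⟩
      · rw [hx2]; exact sd_insert hx1
      · rw [hx2]; exact sd_erase hx1
    have hA : gammaAdd F x ∉ m := by
      rcases hx with ⟨rfl, -, -⟩ | ⟨rfl, -, -⟩
      · exact (List.nodup_cons.mp hnd).1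
      · intro hh
        exact hcons _ (List.mem_cons_self) _ (List.mem_cons_of_mem _ hh)
          (isReverse_symm (isReverse_gamma x))
    have hR : gammaRemove F x ∉ m := by
      rcases hx with ⟨rfl, -, -⟩ | ⟨rfl, -, -⟩
      · intro hh
        exact hcons _ (List.mem_cons_self) _ (List.mem_cons_of_mem _ hh) (isReverse_gamma x)
      · exact (List.nodup_cons.mp hnd).1
    have htok' : ∀ τ' ∈ m, τ' ∈ mediumTokens F := fun τ' hτ' => htok τ' (List.mem_cons_of_mem _ hτ')
    have hpres := preserve m (τ s) htok' h2 hA hR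
    obtain ⟨hcard, c', hc0, hcN, hmem, hstep⟩ :=
      ih (τ s) htok' h2
        (fun a ha b hb => hcons a (List.mem_cons_of_mem _ ha) b (List.mem_cons_of_mem _ hb))
        (List.nodup_cons.mp hnd).2
    have hxnot : x ∉ (τ s : Finset X) ∆ (↑(apply (τ s) m) : Finset X) := by
      simp only [Finset.mem_symmDiff]
      rcases hx with ⟨-, hx1, hx2⟩ | ⟨-, hx1, hx2⟩ <;>
        · rw [hpres, hx2]
          simp [hx1]
    have hsdall : (s : Finset X) ∆ (↑(apply (τ s) m) : Finset X)
        = insert x ((τ s : Finset X) ∆ (↑(apply (τ s) m) : Finset X)) := sd_shift hsd hxnot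
    constructor
    · rw [apply_cons, hsdall, Finset.card_insert_of_notMem hxnot, hcard]
      simp
    · refine ⟨fun i => if i = 0 then (s : Finset X) else c' (i - 1), by simp, ?_, ?_, ?_⟩
      · simp only [List.length_cons, apply_cons]
        rw [show (if m.length + 1 = 0 then (s : Finset X) else c' (m.length + 1 - 1)) = c' m.length
          from by simp]
        exact hcN
      · intro i hi
        by_cases h0 : i = 0
        · simp [h0, s.2]
        · simp only []
          rw [if_neg h0]
          exact hmem (i - 1) (by simp at hi; omega)
      · intro i hi1 hi2
        simp only [List.length_cons] at hi2
        beta_reduce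
        by_cases h0 : i = 1
        · subst h0
          rw [show (if (1:ℕ) - 1 = 0 then (s : Finset X) else c' (1 - 1 - 1)) = (s : Finset X)
            from by simp]
          rw [show (if (1:ℕ) = 0 then (s : Finset X) else c' (1 - 1)) = c' 0 from by simp]
          rw [hc0, hsd]
          simp
        · rw [show (if i - 1 = 0 then (s : Finset X) else c' (i - 1 - 1)) = c' (i - 2)
            from by rw [if_neg (by omega)]; congr 1]
          rw [show (if i = 0 then (s : Finset X) else c' (i - 1)) = c' (i - 1)
            from by rw [if_neg (by omega)]]
          exact hstep (i - 1) (by omega) (by omega)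
end Media
namespace Media
variable {X : Type u} {F : Set (Finset X)}

lemma card_steps_le : ∀ (n : ℕ) (c : ℕ → Finset X),
    (∀ i < n, (c i ∆ c (i + 1)).card = 1) → (c 0 ∆ c n).card ≤ n := by
  intro n
  induction n with
  | zero => intro c _; simp
  | succ n ih =>
    intro c hstep
    have h1 := card_sd_triangle (c 0) (c 1) (c (n + 1))
    have h2 : (c 1 ∆ c (n + 1)).card ≤ n := by
      simpa using ih (fun i => c (i + 1)) (fun i hi => hstep (i + 1) (by omega))
    have h0 : (c 0 ∆ c 1).card = 1 := by simpa using hstep 0 (by omega)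
    omega

lemma exists_add_witness (hWG : WellGraded F) {x : X}
    (hA : ∃ A ∈ F, x ∈ A) (hB : ∃ B ∈ F, x ∉ B) :
    ∃ C, C ∈ F ∧ x ∉ C ∧ insert x C ∈ F := by
  obtain ⟨A, hAF, hxA⟩ := hA
  obtain ⟨B, hBF, hxB⟩ := hB
  have hne : B ≠ A := fun h => hxB (h ▸ hxA)
  obtain ⟨c, hc0, hcN, hmem, hstep⟩ := hWG B hBF A hAF hne
  set N := (B ∆ A).card with hN
  have hexists : ∃ i, x ∈ c i ∧ i ≤ N := ⟨N, by rw [hcN]; exact hxA, le_rfl⟩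
  classical
  obtain ⟨hxi, hiN⟩ := Nat.find_spec hexists
  have hmin : ∀ j, j < Nat.find hexists → ¬(x ∈ c j ∧ j ≤ N) :=
    fun j hj => Nat.find_min hexists hj
  set i := Nat.find hexists with hi
  have hipos : 1 ≤ i := by
    rcases Nat.eq_zero_or_pos i with h | h
    · rw [h, hc0] at hxi; exact absurd hxi hxB
    · exact h
  have hxprev : x ∉ c (i - 1) := by
    intro hmem'
    exact hmin (i - 1) (by omega) ⟨hmem', by omega⟩
  have hcard := hstep i hipos hiN
  obtain ⟨a, ha⟩ := Finset.card_eq_one.mp hcard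
  have hxin : x ∈ c (i - 1) ∆ c i := Finset.mem_symmDiff.mpr (Or.inr ⟨hxi, hxprev⟩)
  have hax : a = x := by rw [ha] at hxin; exact (Finset.mem_singleton.mp hxin).symm
  rw [hax] at ha
  obtain ⟨-, heq⟩ := sd_singleton_eq_insert ha hxprev
  exact ⟨c (i - 1), hmem (i - 1) (by omega), hxprev, heq ▸ hmem i (by omega)⟩

lemma build : ∀ (n : ℕ) (c : ℕ → Finset X) (hmem : ∀ i ≤ n, c i ∈ F),
    (∀ i < n, (c i ∆ c (i + 1)).card = 1) → (c 0 ∆ c n).card = n →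
    ∃ m : List (↥F → ↥F), m.length = n ∧
      (∀ τ ∈ m, ∃ x, Wit F τ x ∧ x ∈ c 0 ∆ c n) ∧
      StepwiseEffective (⟨c 0, hmem 0 (Nat.zero_le n)⟩ : ↥F) m ∧ Consistent m ∧ m.Nodup ∧
      apply (⟨c 0, hmem 0 (Nat.zero_le n)⟩ : ↥F) m = ⟨c n, hmem n le_rfl⟩ := by
  intro n
  induction n with
  | zero =>
    intro c hmem _ _
    exact ⟨[], rfl, by simp, se_nil _, by intro τ h; simp at h, List.nodup_nil, rfl⟩
  | succ n ih =>
    intro c hmem hstep hcard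
    have h01 : (c 0 ∆ c 1).card = 1 := by simpa using hstep 0 (by omega)
    obtain ⟨a, ha⟩ := Finset.card_eq_one.mp h01
    set x0 := a with hx0a
    -- the tail chain
    have hmem' : ∀ i ≤ n, c (i + 1) ∈ F := fun i hi => hmem (i + 1) (by omega)
    have hstep' : ∀ i < n, (c (i + 1) ∆ c (i + 1 + 1)).card = 1 :=
      fun i hi => hstep (i + 1) (by omega)
    have hS_le : (c 1 ∆ c (n + 1)).card ≤ n := by
      simpa using card_steps_le n (fun i => c (i + 1)) hstep'
    have htri := card_sd_triangle (c 0) (c 1) (c (n + 1))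
    have hS : (c 1 ∆ c (n + 1)).card = n := by omega
    have hx0S : x0 ∉ c 1 ∆ c (n + 1) := by
      intro hmemS
      have hsub : c 0 ∆ c (n + 1) ⊆ c 1 ∆ c (n + 1) := by
        intro y hy
        have htri2 : c 0 ∆ c (n + 1) ⊆ (c 0 ∆ c 1) ∪ (c 1 ∆ c (n + 1)) :=
          symmDiff_triangle _ _ _
        have := htri2 hy
        rw [Finset.mem_union, ha, Finset.mem_singleton] at this
        rcases this with rfl | h
        · exact hmemS
        · exact h
      have := Finset.card_le_card hsub
      omega
    have hsdall : c 0 ∆ c (n + 1) = insert x0 (c 1 ∆ c (n + 1)) := sd_shift ha hx0S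
    obtain ⟨m', hlen', htok', hse', hcons', hnd', happ'⟩ :=
      ih (fun i => c (i + 1)) hmem' hstep' hS
    -- the head token
    have hc0 : c 0 ∈ F := hmem 0 (by omega)
    have hc1 : c 1 ∈ F := hmem 1 (by omega)
    obtain ⟨τ0, hwit0, happ0⟩ : ∃ τ0 : ↥F → ↥F, Wit F τ0 x0 ∧
        τ0 ⟨c 0, hc0⟩ = ⟨c 1, hc1⟩ := by
      by_cases hx : x0 ∈ c 0
      · obtain ⟨hx1, he⟩ := sd_singleton_eq_erase ha hx
        refine ⟨gammaRemove F x0, Or.inr ⟨rfl, c 0, hc0, hx, he ▸ hc1⟩, ?_⟩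
        rw [gammaRemove_apply hc0 (he ▸ hc1)]
        exact Subtype.ext he.symm
      · obtain ⟨hx1, he⟩ := sd_singleton_eq_insert ha hx
        refine ⟨gammaAdd F x0, Or.inl ⟨rfl, c 0, hc0, hx, he ▸ hc1⟩, ?_⟩
        rw [gammaAdd_apply hc0 (he ▸ hc1)]
        exact Subtype.ext he.symm
    have hx0mem : x0 ∈ c 0 ∆ c (n + 1) := by rw [hsdall]; exact Finset.mem_insert_self _ _
    refine ⟨τ0 :: m', by simp [hlen'], ?_, ?_, ?_, ?_, ?_⟩
    · intro τ hτ
      rcases List.mem_cons.mp hτ with rfl | hτ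
      · exact ⟨x0, hwit0, hx0mem⟩
      · obtain ⟨y, hy1, hy2⟩ := htok' τ hτ
        exact ⟨y, hy1, by rw [hsdall]; exact Finset.mem_insert_of_mem hy2⟩
    · refine se_cons.mpr ⟨?_, ?_⟩
      · intro h
        have : c 0 = c 1 := congrArg Subtype.val (h.trans happ0)
        rw [this, symmDiff_self] at ha
        exact absurd ha.symm (Finset.singleton_ne_empty x0)
      · rw [happ0]; exact hse'
    · intro τ hτ τ' hτ'
      rcases List.mem_cons.mp hτ with rfl | hτ <;> rcases List.mem_cons.mp hτ' with h' | h'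
      · exact (h' ▸ hwit0.not_isReverse_self)
      · obtain ⟨y, hy1, hy2⟩ := htok' τ' h'
        exact hwit0.not_isReverse hy1 (fun hh => hx0S (hh ▸ hy2))
      · obtain ⟨y, hy1, hy2⟩ := htok' τ hτ
        subst h'
        exact hy1.not_isReverse hwit0 (fun hh => hx0S (hh ▸ hy2))
      · exact hcons' τ hτ τ' h'
    · refine List.nodup_cons.mpr ⟨?_, hnd'⟩
      intro hmem0
      obtain ⟨y, hy1, hy2⟩ := htok' τ0 hmem0
      exact hwit0.ne hy1 (fun hh => hx0S (hh ▸ hy2)) rfl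
    · rw [apply_cons, happ0]
      exact happ'
end Media
section Pairing

lemma pairing {n : ℕ} (A R : Finset (Fin n)) (hd : ∀ k ∈ A, k ∉ R) (hc : A.card = R.card) :
    ∃ g : Fin n → Fin n, (∀ k ∈ A, g k ∈ R) ∧ (∀ k ∈ R, g k ∈ A) ∧
      (∀ k ∈ A ∪ R, g (g k) = k) := by
  classical
  let e := Finset.equivOfCardEq hc
  refine ⟨fun k => if hA : k ∈ A then (e ⟨k, hA⟩ : Fin n)
    else if hR : k ∈ R then (e.symm ⟨k, hR⟩ : Fin n) else k, ?_, ?_, ?_⟩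
  · intro k hk
    beta_reduce
    rw [dif_pos hk]
    exact (e ⟨k, hk⟩).2
  · intro k hk
    beta_reduce
    rw [dif_neg (fun hA => hd k hA hk), dif_pos hk]
    exact (e.symm ⟨k, hk⟩).2
  · intro k hk
    beta_reduce
    rcases Finset.mem_union.mp hk with hA | hR
    · rw [dif_pos hA]
      have h1 : ((e ⟨k, hA⟩ : Fin n)) ∈ R := (e ⟨k, hA⟩).2
      rw [dif_neg (fun h => hd _ h h1), dif_pos h1]
      have : (⟨(e ⟨k, hA⟩ : Fin n), h1⟩ : {x // x ∈ R}) = e ⟨k, hA⟩ := Subtype.ext rfl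
      rw [this, Equiv.symm_apply_apply]
    · have hA : k ∉ A := fun h => hd k h hR
      rw [dif_neg hA, dif_pos hR]
      have h1 : ((e.symm ⟨k, hR⟩ : Fin n)) ∈ A := (e.symm ⟨k, hR⟩).2
      rw [dif_pos h1]
      have : (⟨(e.symm ⟨k, hR⟩ : Fin n), h1⟩ : {x // x ∈ A}) = e.symm ⟨k, hR⟩ := Subtype.ext rfl
      rw [this, Equiv.apply_symm_apply]

end Pairing
namespace Media
variable {X : Type u} {F : Set (Finset X)}

lemma medium_M2 (P : ↥F) (m : List (↥F → ↥F)) (htok : ∀ τ ∈ m, τ ∈ mediumTokens F)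
    (hcl : Closed P m) : Vacuous m := by
  classical
  obtain ⟨hse, happ⟩ := hcl
  set σ : ℕ → ↥F := fun k => apply P (m.take k) with hσ
  have hσ0 : σ 0 = P := rfl
  have hσn : σ m.length = P := by
    simp only [hσ, List.take_length]
    exact happ
  have hstep : ∀ k : Fin m.length, σ (↑k + 1) = (m.get k) (σ ↑k) := by
    intro k
    simp only [hσ]
    rw [apply_take_succ P m ↑k k.isLt]
  have hne : ∀ k : Fin m.length, (m.get k) (σ ↑k) ≠ σ ↑k := by
    intro k
    rw [← hstep k]
    exact (stepwise_take hse ↑k k.isLt).symm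
  have hex : ∀ k : Fin m.length, ∃ (x : X) (bo : Bool),
      m.get k = (if bo then gammaAdd F x else gammaRemove F x) ∧
      (x ∈ (σ (↑k + 1) : Finset X) ↔ bo = true) ∧
      (x ∈ (σ ↑k : Finset X) ↔ bo = false) := by
    intro k
    obtain ⟨x, hx⟩ := step_shape (htok _ (List.get_mem m k)) (σ ↑k) (hne k)
    rcases hx with ⟨h1, h2, h3⟩ | ⟨h1, h2, h3⟩
    · refine ⟨x, true, by simpa using h1, ?_, ?_⟩
      · rw [hstep k, h3]; simp
      · simp [h2]
    · refine ⟨x, false, by simpa using h1, ?_, ?_⟩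
      · rw [hstep k, h3]; simp
      · simp [h2]
  choose e b hb1 hb2 hb3 using hex
  set Afin : X → Finset (Fin m.length) :=
    fun x => Finset.univ.filter (fun k => e k = x ∧ b k = true) with hAfin
  set Rfin : X → Finset (Fin m.length) :=
    fun x => Finset.univ.filter (fun k => e k = x ∧ b k = false) with hRfin
  have hdisj : ∀ x, ∀ k ∈ Afin x, k ∉ Rfin x := by
    intro x k hk hk'
    simp only [hAfin, hRfin, Finset.mem_filter] at hk hk'
    rw [hk.2.2] at hk'
    exact absurd hk'.2.2 (by simp)
  have hcardeq : ∀ x, (Afin x).card = (Rfin x).card := by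
    intro x
    set φ : ℕ → ℤ := fun j => if x ∈ (σ j : Finset X) then 1 else 0 with hφ
    have hterm : ∀ k : Fin m.length,
        (if e k = x ∧ b k = true then (1 : ℤ) else 0)
          - (if e k = x ∧ b k = false then (1 : ℤ) else 0) = φ (↑k + 1) - φ ↑k := by
      intro k
      by_cases hxk : e k = x
      · subst hxk
        cases hbk : b k
        · have m1 := (hb2 k).not.mpr (by simp [hbk])
          have m2 := (hb3 k).mpr hbk
          simp [hφ, hbk, m1, m2]
        · have m1 := (hb2 k).mpr hbk
          have m2 := (hb3 k).not.mpr (by simp [hbk])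
          simp [hφ, hbk, m1, m2]
      · have hmm : x ∈ (σ (↑k + 1) : Finset X) ↔ x ∈ (σ ↑k : Finset X) := by
          rw [hstep k, hb1 k]
          cases hbk : b k
          · rw [if_neg (by decide : ¬(false = true))]
            exact mem_gammaRemove_iff (fun h => hxk h.symm) _
          · rw [if_pos rfl]
            exact mem_gammaAdd_iff (fun h => hxk h.symm) _
        rw [if_neg (fun h => hxk h.1), if_neg (fun h => hxk h.1)]
        simp only [hφ]
        by_cases hxx : x ∈ (σ ↑k : Finset X)
        · rw [if_pos hxx, if_pos (hmm.mpr hxx)]; norm_num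
        · rw [if_neg hxx, if_neg (fun h => hxx (hmm.mp h))]
    have hsum : ∑ k : Fin m.length,
        ((if e k = x ∧ b k = true then (1 : ℤ) else 0)
          - (if e k = x ∧ b k = false then (1 : ℤ) else 0)) = 0 := by
      rw [Finset.sum_congr rfl (fun k _ => hterm k)]
      rw [Fin.sum_univ_eq_sum_range (fun j => φ (j + 1) - φ j) m.length]
      rw [Finset.sum_range_sub φ m.length]
      rw [show φ m.length = φ 0 from by simp only [hφ, hσ0, hσn]]
      ring
    rw [Finset.sum_sub_distrib, Finset.sum_boole, Finset.sum_boole, sub_eq_zero] at hsum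
    have := Nat.cast_inj (R := ℤ) |>.mp hsum
    simpa [hAfin, hRfin] using this
  have hpair := fun x => pairing (Afin x) (Rfin x) (hdisj x) (hcardeq x)
  choose g hg1 hg2 hg3 using hpair
  refine ⟨fun k => g (e k) k, ?_, ?_, ?_⟩
  · intro k
    beta_reduce
    cases hbk : b k
    · have hkR : k ∈ Rfin (e k) := by simp [hRfin, hbk]
      have h1 : g (e k) k ∈ Afin (e k) := hg2 (e k) k hkR
      have he : e (g (e k) k) = e k := by
        simp only [hAfin, Finset.mem_filter] at h1; exact h1.2.1
      rw [he]
      exact hg3 (e k) k (Finset.mem_union.mpr (Or.inr hkR))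
    · have hkA : k ∈ Afin (e k) := by simp [hAfin, hbk]
      have h1 : g (e k) k ∈ Rfin (e k) := hg1 (e k) k hkA
      have he : e (g (e k) k) = e k := by
        simp only [hRfin, Finset.mem_filter] at h1; exact h1.2.1
      rw [he]
      exact hg3 (e k) k (Finset.mem_union.mpr (Or.inl hkA))
  · intro k
    beta_reduce
    cases hbk : b k
    · have hkR : k ∈ Rfin (e k) := by simp [hRfin, hbk]
      have h1 : g (e k) k ∈ Afin (e k) := hg2 (e k) k hkR
      intro hh
      rw [hh] at h1
      exact hdisj (e k) k h1 hkR
    · have hkA : k ∈ Afin (e k) := by simp [hAfin, hbk]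
      have h1 : g (e k) k ∈ Rfin (e k) := hg1 (e k) k hkA
      intro hh
      rw [hh] at h1
      exact hdisj (e k) k hkA h1
  · intro k
    beta_reduce
    cases hbk : b k
    · have hkR : k ∈ Rfin (e k) := by simp [hRfin, hbk]
      have h1 : g (e k) k ∈ Afin (e k) := hg2 (e k) k hkR
      simp only [hAfin, Finset.mem_filter] at h1
      have hget : m.get k = gammaRemove F (e k) := by
        rw [hb1 k, hbk]; simp
      have hget2 : m.get (g (e k) k) = gammaAdd F (e k) := by
        rw [hb1 (g (e k) k), h1.2.2, h1.2.1]; simp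
      rw [hget, hget2]
      exact isReverse_symm (isReverse_gamma (e k))
    · have hkA : k ∈ Afin (e k) := by simp [hAfin, hbk]
      have h1 : g (e k) k ∈ Rfin (e k) := hg1 (e k) k hkA
      simp only [hRfin, Finset.mem_filter] at h1
      have hget : m.get k = gammaAdd F (e k) := by
        rw [hb1 k, hbk]; simp
      have hget2 : m.get (g (e k) k) = gammaRemove F (e k) := by
        rw [hb1 (g (e k) k), h1.2.2, h1.2.1]; simp
      rw [hget, hget2]
      exact isReverse_gamma (e k)

end Media
namespace Media
variable {X : Type u} {F : Set (Finset X)}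

lemma token_ne_id (hWG : WellGraded F) : ∀ τ ∈ mediumTokens F, τ ≠ id := by
  rintro τ ⟨x, hxA, hxB, (rfl | rfl)⟩ hid
  · obtain ⟨C, hC, hxC, hIns⟩ := exists_add_witness hWG hxA hxB
    have h1 : gammaAdd F x ⟨C, hC⟩ = ⟨insert x C, hIns⟩ := gammaAdd_apply hC hIns
    have h2 : gammaAdd F x ⟨C, hC⟩ = ⟨C, hC⟩ := by rw [hid]; rfl
    have : insert x C = C := congrArg Subtype.val (h1.symm.trans h2)
    exact hxC (Finset.insert_eq_self.mp this)
  · obtain ⟨C, hC, hxC, hIns⟩ := exists_add_witness hWG hxA hxB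
    have herase : (insert x C).erase x ∈ F := by rw [Finset.erase_insert hxC]; exact hC
    have h1 : gammaRemove F x ⟨insert x C, hIns⟩ = ⟨(insert x C).erase x, herase⟩ :=
      gammaRemove_apply hIns herase
    have h2 : gammaRemove F x ⟨insert x C, hIns⟩ = ⟨insert x C, hIns⟩ := by rw [hid]; rfl
    have h3 : (insert x C).erase x = insert x C := congrArg Subtype.val (h1.symm.trans h2)
    have : x ∈ (insert x C).erase x := h3.symm ▸ Finset.mem_insert_self x C
    exact Finset.notMem_erase x _ this

lemma medium_M1 (hWG : WellGraded F) (P Q : ↥F) (hPQ : P ≠ Q) :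
    ∃ m : List (↥F → ↥F), (∀ τ ∈ m, τ ∈ mediumTokens F) ∧ Concise P m ∧ apply P m = Q := by
  have hne : (P : Finset X) ≠ (Q : Finset X) := fun h => hPQ (Subtype.ext h)
  obtain ⟨c, h0, hN, hmem, hsteps⟩ := hWG (P : Finset X) P.2 (Q : Finset X) Q.2 hne
  set N := ((P : Finset X) ∆ (Q : Finset X)).card with hNdef
  have hsteps' : ∀ i < N, (c i ∆ c (i + 1)).card = 1 := by
    intro i hi
    have := hsteps (i + 1) (by omega) (by omega)
    simpa using this
  have hcard : (c 0 ∆ c N).card = N := by rw [h0, hN]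
  obtain ⟨m, hlen, htok, hse, hcons, hnd, happ⟩ := build N c hmem hsteps' hcard
  have hP : (⟨c 0, hmem 0 (Nat.zero_le N)⟩ : ↥F) = P := Subtype.ext h0
  have hQ : (⟨c N, hmem N le_rfl⟩ : ↥F) = Q := Subtype.ext hN
  rw [hP] at hse happ
  rw [hQ] at happ
  exact ⟨m, fun τ hτ => (htok τ hτ).choose_spec.1.mem_tokens, ⟨hse, hcons, hnd⟩, happ⟩

end Media

open Media


open Media in
/-- Theorem 4.1: for a family `F` of (finite) subsets of `X` with `|F| ≥ 2`,
the token system `(F, G_F)` is a medium (in particular, every `γ_x` and `γ̃_x`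
differs from the identity transformation of `F`) if and only if `F` is well-graded. -/
theorem isMedium_mediumTokens_iff_wellGraded {X : Type u} (F : Set (Finset X))
    (hF : ∃ A ∈ F, ∃ B ∈ F, A ≠ B) :
    IsMedium (mediumTokens F) ↔ WellGraded F := by
  constructor
  · rintro ⟨-, -, -, hM1, -⟩
    intro A hA B hB hAB
    obtain ⟨m, htok, ⟨hse, hcons, hnd⟩, happ⟩ :=
      hM1 ⟨A, hA⟩ ⟨B, hB⟩ (fun h => hAB (congrArg Subtype.val h))
    obtain ⟨hcard, c, h0, hN, hmem, hsteps⟩ := descend m ⟨A, hA⟩ htok hse hcons hnd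
    rw [happ] at hcard hN
    have hcard' : (A ∆ B).card = m.length := hcard
    have hN' : c m.length = B := hN
    refine ⟨c, h0, ?_, ?_, ?_⟩
    · rw [hcard']; exact hN'
    · intro i hi
      rw [hcard'] at hi
      exact hmem i hi
    · intro i h1 h2
      rw [hcard'] at h2
      exact hsteps i h1 h2
  · intro hWG
    obtain ⟨A, hA, B, hB, hAB⟩ := hF
    refine ⟨⟨⟨A, hA⟩, ⟨B, hB⟩, fun h => hAB (congrArg Subtype.val h)⟩, ?_, token_ne_id hWG,
      medium_M1 hWG, fun P m htok hcl => medium_M2 P m htok hcl⟩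
    -- nonemptiness of the token set
    have hABne : A ∆ B ≠ ∅ := by
      intro h
      exact hAB (by simpa [symmDiff_eq_bot] using h)
    obtain ⟨x, hx⟩ := Finset.nonempty_iff_ne_empty.mpr hABne
    rcases Finset.mem_symmDiff.mp hx with ⟨hxA, hxB⟩ | ⟨hxB, hxA⟩
    · exact ⟨gammaAdd F x, x, ⟨A, hA, hxA⟩, ⟨B, hB, hxB⟩, Or.inl rfl⟩
    · exact ⟨gammaAdd F x, x, ⟨B, hB, hxB⟩, ⟨A, hA, hxA⟩, Or.inl rfl⟩
end

section
/- Let m and n be two concise messages of a medium, both producing a state V from a state S. Then the string n is a permutation of the string m; in particular, C(m) = C(n) and ℓ(m) = ℓ(n). -/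
open scoped Classical symmDiff

universe u

open Media

namespace MediaAux

variable {S : Type u}

theorem isReverse_symm {τ τ' : S → S} (h : IsReverse τ τ') : IsReverse τ' τ := by
  intro P Q hPQ
  have := h Q P (Ne.symm hPQ)
  tauto

theorem isReverse_unique {a b c : S → S} (h1 : IsReverse a b) (h2 : IsReverse a c) :
    b = c := by
  funext q
  by_cases hq : b q = q
  · rw [hq]
    by_contra hc
    have hpq : c q ≠ q := fun h => hc h.symm
    have h4 : a (c q) = q := (h2 (c q) q hpq).mpr rfl
    have h5 : b q = c q := (h1 (c q) q hpq).mp h4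
    rw [hq] at h5
    exact hpq h5.symm
  · have h4 : a (b q) = q := (h1 (b q) q hq).mpr rfl
    exact ((h2 (b q) q hq).mp h4).symm

theorem apply_cons (s : S) (τ : S → S) (m : List (S → S)) :
    apply s (τ :: m) = apply (τ s) m := rfl

theorem apply_append (s : S) (m n : List (S → S)) :
    apply s (m ++ n) = apply (apply s m) n := by
  simp [apply, List.foldl_append]

theorem head?_produced (s : S) (m : List (S → S)) :
    (produced s m).head? = some s := by
  cases m <;> simp [produced, List.scanl]

theorem se_nil (s : S) : StepwiseEffective s ([] : List (S → S)) := by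
  simp [StepwiseEffective, produced, List.scanl, List.Chain', List.isChain_singleton]

theorem se_cons {s : S} {τ : S → S} {m : List (S → S)} :
    StepwiseEffective s (τ :: m) ↔ τ s ≠ s ∧ StepwiseEffective (τ s) m := by
  unfold StepwiseEffective
  have hp : produced s (τ :: m) = s :: produced (τ s) m := by
    simp [produced, List.scanl]
  rw [hp]; unfold List.Chain'; rw [List.isChain_cons]
  constructor
  · rintro ⟨h1, h2⟩
    refine ⟨?_, h2⟩
    have := h1 (τ s) (by rw [head?_produced]; rfl)
    exact fun he => this he.symm
  · rintro ⟨h1, h2⟩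
    refine ⟨?_, h2⟩
    intro b hb
    rw [head?_produced] at hb
    cases hb
    exact fun he => h1 he.symm

theorem se_append {m : List (S → S)} :
    ∀ {s : S} {n : List (S → S)}, StepwiseEffective s m →
      StepwiseEffective (apply s m) n → StepwiseEffective s (m ++ n) := by
  induction m with
  | nil => intro s n _ h2; simpa [apply] using h2
  | cons τ l ih =>
    intro s n h1 h2
    rw [se_cons] at h1
    rw [List.cons_append, se_cons]
    exact ⟨h1.1, ih h1.2 h2⟩

theorem tilde_spec (rev : (S → S) → (S → S)) :
    ∀ {n : List (S → S)} {s : S}, StepwiseEffective s n →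
      (∀ σ ∈ n, IsReverse σ (rev σ)) →
      StepwiseEffective (apply s n) ((n.map rev).reverse) ∧
        apply (apply s n) ((n.map rev).reverse) = s := by
  intro n
  induction n with
  | nil => intro s _ _; exact ⟨se_nil s, rfl⟩
  | cons τ l ih =>
    intro s hse hR
    rw [se_cons] at hse
    obtain ⟨hne, hse'⟩ := hse
    have hRl : ∀ σ ∈ l, IsReverse σ (rev σ) := fun σ hσ => hR σ (List.mem_cons_of_mem _ hσ)
    obtain ⟨ih1, ih2⟩ := ih hse' hRl
    have hτ : IsReverse τ (rev τ) := hR τ List.mem_cons_self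
    have hts : rev τ (τ s) = s := (hτ s (τ s) (fun h => hne h.symm)).mp rfl
    have hnt : ((τ :: l).map rev).reverse = (l.map rev).reverse ++ [rev τ] := by
      simp
    rw [apply_cons, hnt]
    constructor
    · refine se_append ih1 ?_
      rw [ih2, se_cons]
      refine ⟨?_, se_nil _⟩
      rw [hts]
      exact fun h => hne h.symm
    · rw [apply_append, ih2]
      simpa [apply] using hts

theorem exists_reverse {T : Set (S → S)} (hM : IsMedium T) {τ : S → S} (hτ : τ ∈ T) :
    ∃ τ' ∈ T, IsReverse τ τ' := by
  obtain ⟨-, -, hid, hM1, hM2⟩ := hM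
  have hne : τ ≠ id := hid τ hτ
  obtain ⟨P, hP⟩ := Function.ne_iff.mp hne
  simp only [id] at hP
  obtain ⟨m0, hm0T, hm0c, hm0a⟩ := hM1 (τ P) P hP
  have hwT : ∀ σ ∈ τ :: m0, σ ∈ T := by
    intro σ hσ
    rcases List.mem_cons.mp hσ with h | h
    · exact h ▸ hτ
    · exact hm0T σ h
  have hclosed : Closed P (τ :: m0) := by
    refine ⟨se_cons.mpr ⟨hP, hm0c.1⟩, ?_⟩
    rw [apply_cons, hm0a]
  obtain ⟨f, hinv, hfi, hpair⟩ := hM2 P (τ :: m0) hwT hclosed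
  have h0 : (0 : ℕ) < (τ :: m0).length := by simp
  have hp := hpair ⟨0, h0⟩
  exact ⟨(τ :: m0).get (f ⟨0, h0⟩), hwT _ (List.get_mem _ _), hp⟩

theorem subset_aux {T : Set (S → S)} (hM : IsMedium T) {s : S} {m n : List (S → S)}
    (hm : ∀ τ ∈ m, τ ∈ T) (hn : ∀ τ ∈ n, τ ∈ T)
    (hmc : Concise s m) (hnc : Concise s n)
    (heq : apply s m = apply s n) : ∀ τ ∈ m, τ ∈ n := by
  have hex : ∀ σ : S → S, ∃ σ', σ ∈ T → σ' ∈ T ∧ IsReverse σ σ' := by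
    intro σ
    by_cases h : σ ∈ T
    · obtain ⟨σ', h1, h2⟩ := exists_reverse hM h
      exact ⟨σ', fun _ => ⟨h1, h2⟩⟩
    · exact ⟨σ, fun h' => absurd h' h⟩
  choose rev hrev using hex
  set nt := (n.map rev).reverse with hnt
  have hRn : ∀ σ ∈ n, IsReverse σ (rev σ) := fun σ hσ => (hrev σ (hn σ hσ)).2
  obtain ⟨ht1, ht2⟩ := tilde_spec rev hnc.1 hRn
  have hwT : ∀ σ ∈ m ++ nt, σ ∈ T := by
    intro σ hσ
    rcases List.mem_append.mp hσ with h | h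
    · exact hm σ h
    · rw [hnt, List.mem_reverse, List.mem_map] at h
      obtain ⟨a, ha, rfl⟩ := h
      exact (hrev a (hn a ha)).1
  have hclosed : Closed s (m ++ nt) := by
    constructor
    · exact se_append hmc.1 (by rw [heq]; exact ht1)
    · rw [apply_append, heq]; exact ht2
  obtain ⟨f, hinv, hfi, hpair⟩ := hM.2.2.2.2 s (m ++ nt) hwT hclosed
  intro τ hτ
  obtain ⟨i, hi⟩ := List.mem_iff_get.mp hτ
  have hiw : (i : ℕ) < (m ++ nt).length := by
    rw [List.length_append]
    exact Nat.lt_of_lt_of_le i.isLt (Nat.le_add_right _ _)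
  have hgi : (m ++ nt).get ⟨i, hiw⟩ = τ := by
    rw [List.get_eq_getElem, List.getElem_append_left i.isLt]
    rw [← hi, List.get_eq_getElem]
  have hp := hpair ⟨i, hiw⟩
  set j := f ⟨i, hiw⟩ with hj
  rw [hgi] at hp
  by_cases hjm : (j : ℕ) < m.length
  · exfalso
    have hgj : (m ++ nt).get j ∈ m := by
      rw [List.get_eq_getElem, List.getElem_append_left hjm]
      exact List.getElem_mem _
    exact hmc.2.1 τ hτ _ hgj hp
  · have hgj : (m ++ nt).get j ∈ nt := by
      rw [List.get_eq_getElem, List.getElem_append_right (Nat.le_of_not_lt hjm)]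
      exact List.getElem_mem _
    obtain ⟨σ, hσn, hσ⟩ := List.mem_map.mp (List.mem_reverse.mp hgj)
    rw [← hσ] at hp
    have h2 := hRn σ hσn
    have : τ = σ := isReverse_unique (isReverse_symm hp) (isReverse_symm h2)
    rw [this]; exact hσn

end MediaAux

open MediaAux

/-- Corollary 5.1: two concise messages producing the same state `v` from the
same state `s` are permutations of one another; in particular they have the same
content and the same length. -/
theorem concise_perm_of_same_endpoints {S : Type u} {T : Set (S → S)}
    (hM : IsMedium T) (s v : S) (m n : List (S → S))
    (hm : ∀ τ ∈ m, τ ∈ T) (hn : ∀ τ ∈ n, τ ∈ T)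
    (hmc : Concise s m) (hnc : Concise s n)
    (hvm : apply s m = v) (hvn : apply s n = v) :
    m.Perm n ∧ {τ | τ ∈ m} = {τ | τ ∈ n} ∧ m.length = n.length := by
  have h1 := subset_aux hM hm hn hmc hnc (hvm.trans hvn.symm)
  have h2 := subset_aux hM hn hm hnc hmc (hvn.trans hvm.symm)
  have hp : m.Perm n :=
    (List.perm_ext_iff_of_nodup hmc.2.2 hnc.2.2).mpr fun a => ⟨h1 a, h2 a⟩
  exact ⟨hp, Set.ext fun τ => ⟨h1 τ, h2 τ⟩, hp.length_eq⟩
end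

section
/- Let G be a connected bipartite graph with graph distance δ, and let {S,T} and {P,Q} be two distinct edges of G. Then exactly one of the following six cases holds: (1) δ(T,P) = δ(S,Q) = δ(S,P) + 1 = δ(T,Q) − 1; (2) δ(T,P) = δ(S,Q) = δ(S,P) − 1 = δ(T,Q) + 1; (3) δ(S,P) = δ(T,Q) = δ(T,P) + 1 = δ(S,Q) − 1; (4) δ(S,P) = δ(T,Q) = δ(T,P) − 1 = δ(S,Q) + 1; (5) δ(S,P) = δ(T,Q) = δ(T,P) + 1 = δ(S,Q) + 1; (6) δ(S,P) = δ(T,Q) = δ(T,P) − 1 = δ(S,Q) − 1. -/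
private lemma walk_parity {V : Type*} {G : SimpleGraph V} (C : G.Coloring (ZMod 2))
    {a b : V} (w : G.Walk a b) : C b = C a + w.length := by
  induction w with
  | nil => simp
  | cons h p ih =>
    rename_i u v c
    have h1 : C v = C u + 1 := by
      have := C.valid h
      revert this; generalize C v = x; generalize C u = y; revert x y; decide
    rw [ih, h1]
    push_cast [SimpleGraph.Walk.length_cons]
    ring

private lemma adj_dist {V : Type*} {G : SimpleGraph V} (hc : G.Connected)
    (hb : G.Colorable 2) {a b : V} (hab : G.Adj a b) (x : V) :
    (G.dist a x : ℤ) = G.dist b x + 1 ∨ (G.dist a x : ℤ) = G.dist b x - 1 := by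
  obtain ⟨C0⟩ := hb
  let C : G.Coloring (ZMod 2) := C0
  obtain ⟨w1, hw1⟩ := hc.exists_walk_length_eq_dist a x
  obtain ⟨w2, hw2⟩ := hc.exists_walk_length_eq_dist b x
  have p1 := walk_parity C w1
  have p2 := walk_parity C w2
  have hCab : C b = C a + 1 := by
    have := C.valid hab
    revert this; generalize C b = u; generalize C a = v; revert u v; decide
  rw [hw1] at p1; rw [hw2] at p2
  have hpar : ((G.dist a x + G.dist b x : ℕ) : ZMod 2) = 1 := by
    have h0 : (C a : ZMod 2) + (G.dist a x : ℕ) = (C a + 1) + (G.dist b x : ℕ) := by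
      rw [← hCab, ← p1, ← p2]
    push_cast
    revert h0
    generalize (C a : ZMod 2) = u
    generalize ((G.dist a x : ℕ) : ZMod 2) = v
    generalize ((G.dist b x : ℕ) : ZMod 2) = w
    revert u v w; decide
  have hodd : Odd (G.dist a x + G.dist b x) := (ZMod.natCast_eq_one_iff_odd).mp hpar
  have t1 : G.dist a x ≤ G.dist b x + 1 := by
    calc G.dist a x ≤ G.dist a b + G.dist b x := hc.dist_triangle
    _ ≤ 1 + G.dist b x := by
        gcongr
        exact le_of_eq (SimpleGraph.dist_eq_one_iff_adj.mpr hab)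
    _ = G.dist b x + 1 := by omega
  have t2 : G.dist b x ≤ G.dist a x + 1 := by
    calc G.dist b x ≤ G.dist b a + G.dist a x := hc.dist_triangle
    _ ≤ 1 + G.dist a x := by
        gcongr
        exact le_of_eq (SimpleGraph.dist_eq_one_iff_adj.mpr hab.symm)
    _ = G.dist a x + 1 := by omega
  rw [Nat.odd_iff] at hodd
  omega

/-- Theorem 6.3: for two distinct edges `{s, t}` and `{p, q}` of a connected
bipartite graph `G`, exactly one of six cases holds for the graph distances. -/
theorem bipartite_two_edges_six_cases {V : Type*} (G : SimpleGraph V)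
    (hc : G.Connected) (hb : G.Colorable 2) (s t p q : V)
    (hst : G.Adj s t) (hpq : G.Adj p q) (hne : s(s, t) ≠ s(p, q)) :
    ∃! i : Fin 6,
      (![
        (G.dist t p : ℤ) = G.dist s q ∧ (G.dist t p : ℤ) = G.dist s p + 1 ∧
          (G.dist t p : ℤ) = G.dist t q - 1,
        (G.dist t p : ℤ) = G.dist s q ∧ (G.dist t p : ℤ) = G.dist s p - 1 ∧
          (G.dist t p : ℤ) = G.dist t q + 1,
        (G.dist s p : ℤ) = G.dist t q ∧ (G.dist s p : ℤ) = G.dist t p + 1 ∧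
          (G.dist s p : ℤ) = G.dist s q - 1,
        (G.dist s p : ℤ) = G.dist t q ∧ (G.dist s p : ℤ) = G.dist t p - 1 ∧
          (G.dist s p : ℤ) = G.dist s q + 1,
        (G.dist s p : ℤ) = G.dist t q ∧ (G.dist s p : ℤ) = G.dist t p + 1 ∧
          (G.dist s p : ℤ) = G.dist s q + 1,
        (G.dist s p : ℤ) = G.dist t q ∧ (G.dist s p : ℤ) = G.dist t p - 1 ∧
          (G.dist s p : ℤ) = G.dist s q - 1] : Fin 6 → Prop) i := by
  have h1 := adj_dist hc hb hst p        -- d s p vs d t p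
  have h2 := adj_dist hc hb hpq.symm s   -- d q s vs d p s
  have h3 := adj_dist hc hb hst q        -- d s q vs d t q
  have h4 := adj_dist hc hb hpq.symm t   -- d q t vs d p t
  rw [SimpleGraph.dist_comm (u := q) (v := s), SimpleGraph.dist_comm (u := p) (v := s)] at h2
  rw [SimpleGraph.dist_comm (u := q) (v := t), SimpleGraph.dist_comm (u := p) (v := t)] at h4
  rcases h1 with h1|h1 <;> rcases h2 with h2|h2 <;> rcases h3 with h3|h3 <;>
      rcases h4 with h4|h4 <;>
    first
      | (exfalso; omega)
      | exact ⟨0, ⟨by omega, by omega, by omega⟩, fun j hj => by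
          fin_cases j <;> first | rfl | (exfalso; obtain ⟨e1, e2, e3⟩ := hj; omega)⟩
      | exact ⟨1, ⟨by omega, by omega, by omega⟩, fun j hj => by
          fin_cases j <;> first | rfl | (exfalso; obtain ⟨e1, e2, e3⟩ := hj; omega)⟩
      | exact ⟨2, ⟨by omega, by omega, by omega⟩, fun j hj => by
          fin_cases j <;> first | rfl | (exfalso; obtain ⟨e1, e2, e3⟩ := hj; omega)⟩
      | exact ⟨3, ⟨by omega, by omega, by omega⟩, fun j hj => by
          fin_cases j <;> first | rfl | (exfalso; obtain ⟨e1, e2, e3⟩ := hj; omega)⟩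
      | exact ⟨4, ⟨by omega, by omega, by omega⟩, fun j hj => by
          fin_cases j <;> first | rfl | (exfalso; obtain ⟨e1, e2, e3⟩ := hj; omega)⟩
      | exact ⟨5, ⟨by omega, by omega, by omega⟩, fun j hj => by
          fin_cases j <;> first | rfl | (exfalso; obtain ⟨e1, e2, e3⟩ := hj; omega)⟩
end

section
/- A connected graph G = (V,E) is a partial cube if and only if its edges can be labeled by elements of some set J such that: (i) the edges of any shortest path of G have pairwise different labels, and (ii) in each closed walk of G every label appears an even number of times. -/
open scoped Classical symmDiff

universe u

namespace Media

/-- The cube `H(X)`: vertices are the finite subsets of `X`, two subsets being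
adjacent iff their symmetric difference has exactly one element. -/
noncomputable def cubeGraph (X : Type u) : SimpleGraph (Finset X) where
  Adj A B := (A ∆ B).card = 1
  symm := by
    constructor
    intro A B h
    rwa [symmDiff_comm]
  loopless := by
    constructor
    intro A h
    simp [symmDiff_self] at h

/-- A partial cube: a connected graph admitting an isometric embedding into
some cube `H(X)`. -/
def IsPartialCube {V : Type u} (G : SimpleGraph V) : Prop :=
  G.Connected ∧ ∃ (X : Type u) (f : V → Finset X),
    ∀ u v : V, (cubeGraph X).dist (f u) (f v) = G.dist u v

end Media

open Media

namespace Media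

lemma cube_exists_walk {X : Type u} : ∀ (n : ℕ) (A B : Finset X), (A ∆ B).card = n →
    ∃ p : (cubeGraph X).Walk A B, p.length = n := by
  intro n
  induction n with
  | zero =>
    intro A B h
    have : A ∆ B = ∅ := Finset.card_eq_zero.mp h
    have hAB : A = B := by
      rw [← Finset.bot_eq_empty] at this
      exact symmDiff_eq_bot.mp this
    subst hAB
    exact ⟨SimpleGraph.Walk.nil, rfl⟩
  | succ n ih =>
    intro A B h
    have hne : (A ∆ B).Nonempty := by
      rw [← Finset.card_pos, h]; omega
    obtain ⟨x, hx⟩ := hne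
    set B' := B ∆ {x} with hB'
    have h1 : A ∆ B' = (A ∆ B).erase x := by
      have hre : A ∆ B' = (A ∆ B) ∆ {x} := by rw [hB', symmDiff_assoc]
      rw [hre]
      ext y
      rcases eq_or_ne y x with rfl | hyx
      · simp [Finset.mem_symmDiff, hx]
      · simp [Finset.mem_symmDiff, hyx]
    have h2 : (A ∆ B').card = n := by
      rw [h1, Finset.card_erase_of_mem hx, h]; omega
    obtain ⟨p, hp⟩ := ih A B' h2
    have hadj : (cubeGraph X).Adj B' B := by
      show (B' ∆ B).card = 1
      rw [hB', symmDiff_right_comm, symmDiff_self, bot_symmDiff, Finset.card_singleton]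
    exact ⟨p.concat hadj, by rw [SimpleGraph.Walk.length_concat, hp]⟩

lemma cube_card_le_walk {X : Type u} {A B : Finset X} (p : (cubeGraph X).Walk A B) :
    (A ∆ B).card ≤ p.length := by
  induction p with
  | nil => simp
  | @cons A C B h q ih =>
    have key : A ∆ B ⊆ (A ∆ C) ∪ (C ∆ B) := by
      have : A ∆ B = (A ∆ C) ∆ (C ∆ B) := by
        rw [symmDiff_assoc, symmDiff_symmDiff_cancel_left]
      rw [this]
      intro y hy
      rw [Finset.mem_symmDiff] at hy
      rw [Finset.mem_union]
      tauto
    calc (A ∆ B).card ≤ ((A ∆ C) ∪ (C ∆ B)).card := Finset.card_le_card key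
      _ ≤ (A ∆ C).card + (C ∆ B).card := Finset.card_union_le _ _
      _ = 1 + (C ∆ B).card := by rw [h]
      _ ≤ 1 + q.length := Nat.add_le_add_left ih 1
      _ = (SimpleGraph.Walk.cons h q).length := by
            rw [SimpleGraph.Walk.length_cons]; omega

lemma cube_dist {X : Type u} (A B : Finset X) :
    (cubeGraph X).dist A B = (A ∆ B).card := by
  obtain ⟨p, hp⟩ := cube_exists_walk (A ∆ B).card A B rfl
  refine le_antisymm (hp ▸ SimpleGraph.dist_le p) ?_
  obtain ⟨q, hq⟩ := (SimpleGraph.Walk.reachable p).exists_walk_length_eq_dist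
  exact hq ▸ cube_card_le_walk q

lemma mem_foldr_symmDiff {X : Type u} (x : X) :
    ∀ L : List (Finset X), (x ∈ L.foldr (· ∆ ·) ∅ ↔ Odd (L.countP (fun s => x ∈ s))) := by
  intro L
  induction L with
  | nil => simp
  | cons s L ih =>
    simp only [List.foldr_cons, Finset.mem_symmDiff, List.countP_cons]
    by_cases hx : x ∈ s
    · simp only [hx, true_and, not_true, and_false, or_false]
      rw [if_pos (by simp), ih, Nat.odd_iff, Nat.odd_iff]
      omega
    · simp only [hx, false_and, not_false_eq_true, and_true, false_or]
      rw [if_neg (by simp), Nat.add_zero, ih]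

lemma card_foldr_le {X : Type u} :
    ∀ L : List (Finset X), (∀ s ∈ L, s.card = 1) → (L.foldr (· ∆ ·) ∅).card ≤ L.length := by
  intro L
  induction L with
  | nil => simp
  | cons s L ih =>
    intro h
    have h1 : (s ∆ L.foldr (· ∆ ·) ∅).card ≤ s.card + (L.foldr (· ∆ ·) ∅).card := by
      refine le_trans (Finset.card_le_card ?_) (Finset.card_union_le _ _)
      intro y hy
      rw [Finset.mem_symmDiff] at hy
      rw [Finset.mem_union]
      tauto
    have hs := h s List.mem_cons_self
    have := ih (fun t ht => h t (List.mem_cons_of_mem s ht))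
    simp only [List.foldr_cons, List.length_cons]
    omega

lemma nodup_of_card_foldr {X : Type u} :
    ∀ L : List (Finset X), (∀ s ∈ L, s.card = 1) →
      (L.foldr (· ∆ ·) ∅).card = L.length → L.Nodup := by
  intro L
  induction L with
  | nil => simp
  | cons s L ih =>
    intro h hcard
    set F := L.foldr (· ∆ ·) ∅ with hF
    have hs : s.card = 1 := h s List.mem_cons_self
    have hall : ∀ t ∈ L, t.card = 1 := fun t ht => h t (List.mem_cons_of_mem s ht)
    have hle : F.card ≤ L.length := card_foldr_le L hall
    have hsub : s ∆ F ⊆ s ∪ F := by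
      intro y hy
      rw [Finset.mem_symmDiff] at hy
      rw [Finset.mem_union]
      tauto
    have hun : (s ∪ F).card ≤ s.card + F.card := Finset.card_union_le _ _
    have hcard' : (s ∆ F).card = L.length + 1 := by
      simpa using hcard
    have hFcard : F.card = L.length := by
      have := Finset.card_le_card hsub
      omega
    have hnd : L.Nodup := ih hall hFcard
    -- disjointness of s and F
    have heq : s ∆ F = s ∪ F := by
      apply Finset.eq_of_subset_of_card_le hsub
      have := Finset.card_le_card hsub
      omega
    have hdisj : ∀ y, y ∈ s → y ∉ F := by
      intro y hys hyF
      have : y ∈ s ∪ F := Finset.mem_union_left _ hys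
      rw [← heq, Finset.mem_symmDiff] at this
      tauto
    refine List.Nodup.cons ?_ hnd
    intro hmem
    obtain ⟨x, hx⟩ := Finset.card_eq_one.mp hs
    have hcount : L.count s = 1 := List.count_eq_one_of_mem hnd hmem
    have hcp : L.countP (fun t => x ∈ t) = 1 := by
      rw [← hcount, List.count_eq_countP]
      apply List.countP_congr
      intro t ht
      obtain ⟨y, hy⟩ := Finset.card_eq_one.mp (hall t ht)
      subst hy hx
      simp only [beq_iff_eq, decide_eq_true_eq, Finset.mem_singleton, Finset.singleton_inj]
      exact eq_comm
    have : x ∈ F := (mem_foldr_symmDiff x L).mpr (by rw [hcp]; exact odd_one)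
    exact hdisj x (by simp [hx]) this

lemma foldr_symmDiff_walk {V X : Type u} {G : SimpleGraph V} (f : V → Finset X)
    (l : Sym2 V → Finset X) (hl : ∀ u v : V, l s(u, v) = f u ∆ f v) :
    ∀ {a b : V} (p : G.Walk a b), (p.edges.map l).foldr (· ∆ ·) ∅ = f a ∆ f b := by
  intro a b p
  induction p with
  | nil => simp
  | @cons a b c h q ih =>
    simp only [SimpleGraph.Walk.edges_cons, List.map_cons, List.foldr_cons, ih, hl]
    rw [symmDiff_assoc, symmDiff_symmDiff_cancel_left]

end Media

private theorem aux_forward {V : Type u} (G : SimpleGraph V) (hpc : IsPartialCube G) :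
    ∃ (J : Type u) (l : Sym2 V → J),
      (∀ (a b : V) (w : G.Walk a b), w.length = G.dist a b →
        (w.edges.map l).Nodup) ∧
      (∀ (a : V) (w : G.Walk a a) (j : J),
        Even ((w.edges.map l).count j)) := by
  obtain ⟨hc, X, f, hf⟩ := hpc
  set l : Sym2 V → Finset X :=
    Sym2.lift ⟨fun u v => f u ∆ f v, fun u v => symmDiff_comm (f u) (f v)⟩ with hldef
  have hl : ∀ u v : V, l s(u, v) = f u ∆ f v := fun u v => rfl
  have hcard1 : ∀ {a b : V} (p : G.Walk a b), ∀ s ∈ p.edges.map l, s.card = 1 := by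
    intro a b p s hs
    obtain ⟨e, he, rfl⟩ := List.mem_map.mp hs
    have hE := p.edges_subset_edgeSet he
    induction e with
    | _ u v =>
      rw [SimpleGraph.mem_edgeSet] at hE
      rw [hl, ← cube_dist, hf]
      exact SimpleGraph.dist_eq_one_iff_adj.mpr hE
  refine ⟨Finset X, l, ?_, ?_⟩
  · intro a b w hw
    have hfold := foldr_symmDiff_walk f l hl w
    apply nodup_of_card_foldr _ (hcard1 w)
    rw [hfold, ← cube_dist, hf, List.length_map, SimpleGraph.Walk.length_edges, hw]
  · intro a w j
    have hfold := foldr_symmDiff_walk f l hl w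
    rw [symmDiff_self] at hfold
    simp only [List.count_eq_countP]
    by_cases hj : j ∈ w.edges.map l
    · obtain ⟨x, rfl⟩ := Finset.card_eq_one.mp (hcard1 w j hj)
      rw [List.countP_congr (q := fun s => decide (x ∈ s)) ?_]
      · have hno : ¬ Odd ((w.edges.map l).countP (fun s => x ∈ s)) := by
          rw [← mem_foldr_symmDiff, hfold]
          simp
        exact Nat.not_odd_iff_even.mp hno
      · intro t ht
        obtain ⟨y, hy⟩ := Finset.card_eq_one.mp (hcard1 w t ht)
        subst hy
        simp only [beq_iff_eq, decide_eq_true_eq, Finset.mem_singleton, Finset.singleton_inj]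
        exact eq_comm
    · rw [List.countP_eq_zero.mpr ?_]
      · exact Even.zero
      · intro t ht hbeq
        exact hj (by rwa [show t = j from by simpa using hbeq] at ht)

private theorem aux_backward {V : Type u} (G : SimpleGraph V) (hc : G.Connected)
    (J : Type u) (l : Sym2 V → J)
    (hi : ∀ (a b : V) (w : G.Walk a b), w.length = G.dist a b → (w.edges.map l).Nodup)
    (hii : ∀ (a : V) (w : G.Walk a a) (j : J), Even ((w.edges.map l).count j)) :
    IsPartialCube G := by
  have hne : Nonempty V := hc.nonempty
  set v0 : V := Classical.arbitrary V with hv0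
  set w : ∀ v : V, G.Walk v0 v := fun v => (hc.exists_walk_length_eq_dist v0 v).choose with hwdef
  set f : V → Finset J := fun v =>
    ((w v).edges.map l).toFinset.filter (fun j => Odd (((w v).edges.map l).count j)) with hfdef
  have hmemf : ∀ (v : V) (j : J), j ∈ f v ↔ Odd (((w v).edges.map l).count j) := by
    intro v j
    simp only [hfdef, Finset.mem_filter, List.mem_toFinset, and_iff_right_iff_imp]
    intro hodd
    apply List.count_pos_iff.mp
    rcases Nat.eq_zero_or_pos (((w v).edges.map l).count j) with h0 | h
    · rw [h0] at hodd; simp [Nat.odd_iff] at hodd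
    · exact h
  have key : ∀ (u v : V) (p : G.Walk u v) (j : J),
      (j ∈ f u ∆ f v ↔ Odd ((p.edges.map l).count j)) := by
    intro u v p j
    have hclosed := hii v0 (((w u).append p).append (w v).reverse) j
    have hcount : ((((w u).append p).append (w v).reverse).edges.map l).count j
        = (((w u).edges.map l).count j + (p.edges.map l).count j)
          + ((w v).edges.map l).count j := by
      rw [SimpleGraph.Walk.edges_append, SimpleGraph.Walk.edges_append,
        SimpleGraph.Walk.edges_reverse, List.map_append, List.map_append,
        List.count_append, List.count_append, List.map_reverse, List.count_reverse]
    rw [hcount] at hclosed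
    rw [Finset.mem_symmDiff, hmemf, hmemf]
    rw [Nat.even_iff] at hclosed
    rw [Nat.odd_iff, Nat.odd_iff, Nat.odd_iff]
    omega
  refine ⟨hc, J, f, ?_⟩
  intro u v
  obtain ⟨p, hp⟩ := hc.exists_walk_length_eq_dist u v
  have hnd : (p.edges.map l).Nodup := hi u v p hp
  have hset : f u ∆ f v = (p.edges.map l).toFinset := by
    ext j
    rw [key u v p j, List.mem_toFinset]
    constructor
    · intro hodd
      apply List.count_pos_iff.mp
      rcases Nat.eq_zero_or_pos ((p.edges.map l).count j) with h0 | h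
      · rw [h0] at hodd; simp [Nat.odd_iff] at hodd
      · exact h
    · intro hmem
      rw [List.count_eq_one_of_mem hnd hmem]
      exact odd_one
  rw [cube_dist, hset, List.toFinset_card_of_nodup hnd, List.length_map,
    SimpleGraph.Walk.length_edges, hp]

/-- Theorem 6.6: a connected graph `G` is a partial cube if and only if its
edges can be labeled by elements of some set `J` so that (i) edges of any
shortest path of `G` have pairwise different labels, and (ii) in each closed
walk of `G` every label appears an even number of times. -/
theorem isPartialCube_iff_labeling {V : Type u} (G : SimpleGraph V)
    (hc : G.Connected) :
    IsPartialCube G ↔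
      ∃ (J : Type u) (l : Sym2 V → J),
        (∀ (a b : V) (w : G.Walk a b), w.length = G.dist a b →
          (w.edges.map l).Nodup) ∧
        (∀ (a : V) (w : G.Walk a a) (j : J),
          Even ((w.edges.map l).count j)) := by
  exact ⟨aux_forward G, fun ⟨J, l, hi, hii⟩ => aux_backward G hc J l hi hii⟩
end
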